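/- Let f : ℤ^m → ℚ be periodic with period p in each variable (i.e., f(x + p·e_i) = f(x) for every standard basis vector e_i and all x ∈ ℤ^m, where p is a positive integer), let j be a fixed nonnegative integer, and fix integers a_1, …, a_m, c_0, …, c_m, and d ≠ 0. Then the function Q_3 : ℤ^{m+1} → ℚ defined by Q_3(t_0, t_1, …, t_m) = Σ_{k=0}^{⌊(c_0 t_0 + ⋯ + c_m t_m)/d⌋} f(t_1 + a_1 k, …, t_m + a_m k) · k^j, where the sum is taken with the signed convention, is a quasipolynomial on ℤ^{m+1}. -/

import Mathlib

/-- A function `Q : ℤ^d → ℚ` is a quasipolynomial if there are a positive integer `p`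
and polynomials `q_r ∈ ℚ[x₁,…,x_d]`, indexed by residue vectors `r ∈ (ℤ/p)^d`, with
`Q t = q_{t mod p}(t)` for all `t ∈ ℤ^d`. -/
def IsQuasiPolynomial {d : ℕ} (Q : (Fin d → ℤ) → ℚ) : Prop :=
  ∃ p : ℕ, 0 < p ∧ ∃ q : (Fin d → ZMod p) → MvPolynomial (Fin d) ℚ,
    ∀ t : Fin d → ℤ, Q t = MvPolynomial.eval (fun i => (t i : ℚ)) (q fun i => (t i : ZMod p))

/-- The signed convention for a finite sum `∑_{k=a}^{b} f(k)` over integers: the ordinary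
sum if `a ≤ b`, the value `0` if `a = b + 1`, and `-∑_{k=b+1}^{a-1} f(k)` if `a ≥ b + 2`. -/
noncomputable def signedSum (a b : ℤ) (f : ℤ → ℚ) : ℚ :=
  if a ≤ b then ∑ k ∈ Finset.Icc a b, f k else -∑ k ∈ Finset.Icc (b + 1) (a - 1), f k



lemma Icc_insert_left {a b : ℤ} (h : a ≤ b) :
    Finset.Icc a b = insert a (Finset.Icc (a+1) b) := by
  ext x; simp [Finset.mem_Icc]; omega

lemma Icc_insert_right {a b : ℤ} (h : a ≤ b) :
    Finset.Icc a b = insert b (Finset.Icc a (b-1)) := by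
  ext x; simp [Finset.mem_Icc]; omega

lemma signedSum_succ (g : ℤ → ℚ) (b : ℤ) :
    signedSum 0 (b + 1) g = signedSum 0 b g + g (b + 1) := by
  unfold signedSum
  rcases lt_trichotomy b (-1) with h | h | h
  · rw [if_neg (by omega), if_neg (by omega)]
    rw [Icc_insert_left (show b+1 ≤ (0:ℤ)-1 by omega),
      Finset.sum_insert (by simp [Finset.mem_Icc])]
    ring
  · subst h; norm_num
  · rw [if_pos (by omega), if_pos (by omega)]
    rw [Icc_insert_right (show (0:ℤ) ≤ b+1 by omega),
      Finset.sum_insert (by simp [Finset.mem_Icc])]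
    simp [add_comm]

open Polynomial in
noncomputable def ffPoly (n : ℕ) : Polynomial ℚ := ∏ i ∈ Finset.range n, (X - C (i : ℚ))

open Polynomial

lemma ffPoly_monic (n : ℕ) : (ffPoly n).Monic :=
  monic_prod_of_monic _ _ (fun i _ => monic_X_sub_C _)

lemma ffPoly_natDegree (n : ℕ) : (ffPoly n).natDegree = n := by
  unfold ffPoly
  rw [natDegree_prod _ _ (fun i _ => X_sub_C_ne_zero _)]
  have h : ∀ i ∈ Finset.range n, (X - C (i:ℚ)).natDegree = 1 :=
    fun i _ => natDegree_X_sub_C _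
  rw [Finset.sum_congr rfl h]
  simp

lemma ffPoly_eval (n : ℕ) (x : ℚ) : (ffPoly n).eval x = ∏ i ∈ Finset.range n, (x - i) := by
  unfold ffPoly; simp [eval_prod]

lemma ffPoly_diff (n : ℕ) (x : ℚ) :
    (ffPoly (n+1)).eval x - (ffPoly (n+1)).eval (x-1)
      = (n+1) * (ffPoly n).eval (x-1) := by
  simp only [ffPoly_eval]
  have h1 : ∏ i ∈ Finset.range (n+1), (x - i)
      = x * ∏ i ∈ Finset.range n, (x - 1 - i) := by
    rw [Finset.prod_range_succ']
    simp only [Nat.cast_zero, sub_zero, Nat.cast_add, Nat.cast_one]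
    rw [mul_comm]
    congr 1
    apply Finset.prod_congr rfl
    intro i _; ring
  have h2 : ∏ i ∈ Finset.range (n+1), (x - 1 - i)
      = (∏ i ∈ Finset.range n, (x - 1 - i)) * (x - 1 - n) := Finset.prod_range_succ _ _
  rw [h1, h2]; ring

lemma exists_antidiff : ∀ (n : ℕ) (P : Polynomial ℚ), P.natDegree ≤ n →
    ∃ Q : Polynomial ℚ, ∀ x : ℚ, Q.eval x - Q.eval (x-1) = P.eval x := by
  intro n
  induction n with
  | zero =>
    intro P hP
    refine ⟨C (P.coeff 0) * X, fun x => ?_⟩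
    rw [Polynomial.eq_C_of_natDegree_le_zero hP]
    simp; ring
  | succ n ih =>
    intro P hP
    set G : Polynomial ℚ := (ffPoly (n+1)).comp (X - C 1) with hG
    have hGdeg : G.natDegree = n + 1 := by
      rw [hG, natDegree_comp, ffPoly_natDegree, natDegree_X_sub_C, mul_one]
    have hGmonic : G.Monic := by
      unfold Monic
      rw [hG, leadingCoeff_comp (by rw [natDegree_X_sub_C]; norm_num)]
      rw [(ffPoly_monic (n+1)).leadingCoeff, leadingCoeff_X_sub_C, one_pow, one_mul]
    set c := P.coeff (n+1) with hc
    have hP' : (P - C c * G).natDegree ≤ n := by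
      apply Polynomial.natDegree_le_iff_coeff_eq_zero.2
      intro k hk
      rw [coeff_sub, coeff_C_mul]
      rcases eq_or_lt_of_le (Nat.succ_le_of_lt hk) with h | h
      · rw [← h]
        have : G.coeff (n+1) = 1 := by
          have := hGmonic.coeff_natDegree
          rwa [hGdeg] at this
        rw [this, mul_one, hc]; ring
      · rw [Polynomial.coeff_eq_zero_of_natDegree_lt (lt_of_le_of_lt hP h),
          Polynomial.coeff_eq_zero_of_natDegree_lt (by rw [hGdeg]; exact h)]
        ring
    obtain ⟨Q', hQ'⟩ := ih _ hP'
    refine ⟨Q' + C (c / (n+2)) * ffPoly (n+2), fun x => ?_⟩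
    have hne : ((n:ℚ) + 2) ≠ 0 := by positivity
    have hd2 : (ffPoly (n+2)).eval x - (ffPoly (n+2)).eval (x-1)
        = ((n:ℚ)+2) * (ffPoly (n+1)).eval (x-1) := by
      have h := ffPoly_diff (n+1) x
      push_cast at h
      rw [show n+1+1 = n+2 from rfl] at h
      linear_combination h
    have hd3 : c/((n:ℚ)+2) * ((ffPoly (n+2)).eval x - (ffPoly (n+2)).eval (x-1))
        = c * (ffPoly (n+1)).eval (x-1) := by
      rw [hd2]; field_simp
    have hGeval : G.eval x = (ffPoly (n+1)).eval (x - 1) := by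
      rw [hG, eval_comp]; simp
    have hQ := hQ' x
    simp only [eval_add, eval_mul, eval_C, eval_sub] at *
    push_cast at hQ ⊢
    linear_combination hQ + hd3 - c * hGeval

lemma signedSum_sub_period (g : ℤ → ℚ) (N : ℤ) (n : ℕ) :
    signedSum 0 N g = signedSum 0 (N - n) g + ∑ i ∈ Finset.range n, g (N - i) := by
  induction n with
  | zero => simp
  | succ n ih =>
    rw [ih, Finset.sum_range_succ]
    have h := signedSum_succ g (N - n - 1)
    rw [show N - n - 1 + 1 = N - n by ring] at h
    rw [h, show N - (n+1:ℕ) = N - n - 1 by push_cast; ring]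
    ring

lemma const_of_step (u : ℤ → ℚ) (h : ∀ l : ℤ, u (l + 1) = u l) : ∀ l : ℤ, u l = u 0 := by
  intro l
  induction l using Int.induction_on with
  | zero => rfl
  | succ k ih => rw [h k, ih]
  | pred k ih =>
    have h2 := h (-(k:ℤ) - 1)
    rw [show -(k:ℤ) - 1 + 1 = -(k:ℤ) by ring] at h2
    rw [← h2]
    exact ih

open Polynomial in
lemma onevar_quasi (q : ℕ) (hq : 0 < q) (g : ℤ → ℚ) (u : ZMod q → Polynomial ℚ)
    (hu : ∀ k : ℤ, g k = (u ((k : ZMod q))).eval (k : ℚ)) :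
    ∃ v : ZMod q → Polynomial ℚ,
      ∀ N : ℤ, signedSum 0 N g = ((v ((N : ZMod q))).eval (N : ℚ)) := by
  haveI : NeZero q := ⟨hq.ne'⟩
  have claim : ∀ ν : ZMod q, ∃ w : Polynomial ℚ,
      ∀ N : ℤ, ((N : ZMod q)) = ν → signedSum 0 N g = w.eval (N : ℚ) := by
    intro ν
    set ν₀ : ℤ := (ν.val : ℤ) with hν₀
    have hν₀cast : ((ν₀ : ZMod q)) = ν := by
      rw [hν₀]; push_cast; simp [ZMod.natCast_val, ZMod.cast_id]
    set E : Polynomial ℚ := ∑ i ∈ Finset.range q,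
      (u (((ν₀ - i : ℤ) : ZMod q))).comp (C ((ν₀ : ℚ) - i) + C (q : ℚ) * X) with hE
    have hEeval : ∀ l : ℤ, E.eval (l : ℚ) = ∑ i ∈ Finset.range q, g (ν₀ + q * l - i) := by
      intro l
      rw [hE, eval_finset_sum]
      apply Finset.sum_congr rfl
      intro i _
      rw [eval_comp, hu (ν₀ + q * l - i)]
      have hres : (((ν₀ + q * l - i : ℤ) : ZMod q)) = ((ν₀ - i : ℤ) : ZMod q) := by
        push_cast
        simp [ZMod.natCast_self]
      rw [hres]
      congr 1
      push_cast
      simp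
      ring
    obtain ⟨Q, hQ⟩ := exists_antidiff E.natDegree E le_rfl
    set H : ℤ → ℚ := fun l => signedSum 0 (ν₀ + q * l) g with hH
    have hstep : ∀ l : ℤ, H l = H (l - 1) + E.eval (l : ℚ) := by
      intro l
      rw [hH]
      have h := signedSum_sub_period g (ν₀ + q * l) q
      rw [show ν₀ + q * l - (q:ℤ) = ν₀ + q * (l - 1) by ring] at h
      simp only []
      rw [h, hEeval l]
    set K : ℤ → ℚ := fun l => H l - Q.eval (l : ℚ) with hK
    have hKstep : ∀ l : ℤ, K (l + 1) = K l := by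
      intro l
      have h1 := hstep (l + 1)
      have h2 := hQ ((l : ℚ) + 1)
      rw [hK]
      simp only []
      rw [show ((l:ℚ) + 1 - 1) = (l:ℚ) by ring] at h2
      push_cast at h1 ⊢
      rw [show (l:ℤ) + 1 - 1 = l by ring] at h1
      linarith [h1, h2]
    have hKconst := const_of_step K hKstep
    refine ⟨Q.comp (C (1/(q:ℚ)) * (X - C (ν₀ : ℚ))) + C (K 0), ?_⟩
    intro N hN
    have hdvd : (q : ℤ) ∣ N - ν₀ := by
      have : ((N - ν₀ : ℤ) : ZMod q) = 0 := by
        push_cast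
        rw [hN, hν₀cast]; ring
      exact (ZMod.intCast_zmod_eq_zero_iff_dvd _ _).1 this
    obtain ⟨l, hl⟩ := hdvd
    have hNl : N = ν₀ + q * l := by omega
    have harg : (1/(q:ℚ)) * ((N : ℚ) - (ν₀ : ℚ)) = (l : ℚ) := by
      have : ((N : ℚ) - ν₀) = (q : ℚ) * l := by push_cast [hNl]; ring
      rw [this]
      field_simp
    rw [eval_add, eval_comp, eval_C, eval_mul, eval_sub, eval_C, eval_C, eval_X, harg]
    have := hKconst l
    rw [hK] at this
    simp only [] at this
    have hH0 : H l = signedSum 0 N g := by rw [hH, hNl]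
    have hK0 : K 0 = H 0 - Q.eval (((0:ℤ) : ℚ)) := rfl
    push_cast at hK0 this
    linarith [this, hH0, hK0]
  choose v hv using claim
  exact ⟨v, fun N => hv _ N rfl⟩

lemma signedSum_sum {ι : Type*} (s : Finset ι) (a b : ℤ) (F : ι → ℤ → ℚ) :
    signedSum a b (fun k => ∑ i ∈ s, F i k) = ∑ i ∈ s, signedSum a b (F i) := by
  unfold signedSum
  split_ifs with h
  · exact Finset.sum_comm
  · rw [Finset.sum_comm]
    rw [← Finset.sum_neg_distrib]

lemma signedSum_const_mul (a b : ℤ) (C : ℚ) (u : ℤ → ℚ) :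
    signedSum a b (fun k => C * u k) = C * signedSum a b u := by
  unfold signedSum
  split_ifs with h <;> simp [Finset.mul_sum]

section periodic
variable {m : ℕ} (f : (Fin m → ℤ) → ℚ) (p : ℕ)

lemma shift_nat (hf : ∀ (x : Fin m → ℤ) (i : Fin m),
      f (Function.update x i (x i + (p : ℤ))) = f x) :
    ∀ (n : ℕ) (x : Fin m → ℤ) (i : Fin m),
      f (Function.update x i (x i + (p:ℤ) * n)) = f x := by
  intro n
  induction n with
  | zero => intro x i; simp
  | succ n ih =>
    intro x i
    have h1 := hf (Function.update x i (x i + (p:ℤ) * n)) i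
    rw [Function.update_self, Function.update_idem] at h1
    rw [show x i + (p:ℤ) * (n+1:ℕ) = x i + (p:ℤ) * n + p by push_cast; ring]
    rw [h1, ih x i]

lemma shift_int (hf : ∀ (x : Fin m → ℤ) (i : Fin m),
      f (Function.update x i (x i + (p : ℤ))) = f x)
    (x : Fin m → ℤ) (i : Fin m) (z : ℤ) :
    f (Function.update x i (x i + (p:ℤ) * z)) = f x := by
  rcases le_or_gt 0 z with h | h
  · have := shift_nat f p hf z.toNat x i
    rwa [Int.toNat_of_nonneg h] at this
  · have h2 := shift_nat f p hf (-z).toNat (Function.update x i (x i + (p:ℤ) * z)) i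
    rw [Int.toNat_of_nonneg (by omega), Function.update_self, Function.update_idem] at h2
    rw [show x i + (p:ℤ) * z + (p:ℤ) * (-z) = x i by ring, Function.update_eq_self] at h2
    exact h2.symm

lemma shift_finset (hf : ∀ (x : Fin m → ℤ) (i : Fin m),
      f (Function.update x i (x i + (p : ℤ))) = f x) :
    ∀ (s : Finset (Fin m)) (x : Fin m → ℤ) (z : Fin m → ℤ),
      f (fun i => x i + (p:ℤ) * (if i ∈ s then z i else 0)) = f x := by
  intro s
  induction s using Finset.induction_on with
  | empty => intro x z; simp
  | @insert a s ha ih =>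
    intro x z
    have key : (fun i => x i + (p:ℤ) * (if i ∈ insert a s then z i else 0))
        = Function.update (fun i => x i + (p:ℤ) * (if i ∈ s then z i else 0)) a
          ((fun i => x i + (p:ℤ) * (if i ∈ s then z i else 0)) a + (p:ℤ) * z a) := by
      funext i
      by_cases h : i = a
      · subst h; simp [Function.update_self, ha]
      · simp only [Function.update_of_ne h, Finset.mem_insert, h, false_or]
    rw [key, shift_int f p hf _ a (z a), ih x z]

lemma shift_dvd (hf : ∀ (x : Fin m → ℤ) (i : Fin m),
      f (Function.update x i (x i + (p : ℤ))) = f x)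
    (x y : Fin m → ℤ) (h : ∀ i, (p:ℤ) ∣ x i - y i) : f x = f y := by
  have hx : x = fun i => y i + (p:ℤ) * (if i ∈ (Finset.univ : Finset (Fin m)) then ((x i - y i) / p) else 0) := by
    funext i
    simp only [Finset.mem_univ, if_true]
    rw [Int.mul_ediv_cancel' (h i)]
    ring
  rw [hx, shift_finset f p hf Finset.univ y _]

end periodic

lemma signedSum_congr {a b : ℤ} {u w : ℤ → ℚ} (h : ∀ k, u k = w k) :
    signedSum a b u = signedSum a b w :=
  congrArg (signedSum a b) (funext h)

lemma mv_eval_polyaeval {n : ℕ} (φ : Fin n → ℚ) (P : MvPolynomial (Fin n) ℚ)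
    (w : Polynomial ℚ) :
    MvPolynomial.eval φ (Polynomial.aeval P w)
      = Polynomial.eval (MvPolynomial.eval φ P) w := by
  have h := Polynomial.aeval_algHom_apply (MvPolynomial.aeval (R := ℚ) φ) P w
  have h2 : ∀ q : MvPolynomial (Fin n) ℚ,
      MvPolynomial.aeval φ q = MvPolynomial.eval φ q := by
    intro q
    rw [← MvPolynomial.coe_aeval_eq_eval]; rfl
  rw [← h2, ← h, h2, ← Polynomial.coe_aeval_eq_eval]


/-- **Core case of the lemma on quasipolynomials.**  If `f : ℤ^m → ℚ` is periodic with
period `p > 0` in each variable, `j` is a fixed nonnegative integer, and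
`a₁,…,a_m, c₀,…,c_m, d` are integers with `d ≠ 0`, then
`Q₃(t₀,…,t_m) = ∑_{k=0}^{⌊(c₀t₀+⋯+c_mt_m)/d⌋} f(t₁+a₁k, …, t_m+a_mk) · k^j`
(signed-sum convention) is a quasipolynomial on `ℤ^{m+1}`. -/
theorem quasipolynomial_signed_sum_periodic
    (m : ℕ) (f : (Fin m → ℤ) → ℚ) (p : ℕ) (hp : 0 < p)
    (hf : ∀ (x : Fin m → ℤ) (i : Fin m), f (Function.update x i (x i + (p : ℤ))) = f x)
    (j : ℕ) (a : Fin m → ℤ) (c : Fin (m + 1) → ℤ) (d : ℤ) (hd : d ≠ 0) :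
    IsQuasiPolynomial (fun t : Fin (m + 1) → ℤ =>
      signedSum 0 ⌊((∑ i, c i * t i : ℤ) : ℚ) / (d : ℚ)⌋
        (fun k => f (fun i => t i.succ + a i * k) * (k : ℚ) ^ j)) := by
  classical
  haveI : NeZero p := ⟨hp.ne'⟩
  have hpz : (0:ℤ) < (p:ℤ) := by exact_mod_cast hp
  set g : ℕ → ℤ → ℚ := fun s k => (if k % (p:ℤ) = (s:ℤ) then (1:ℚ) else 0) * (k:ℚ)^j with hg
  -- one-variable quasipolynomials for the indicator sums
  have hvall : ∀ s : ℕ, ∃ v : ZMod p → Polynomial ℚ, ∀ N : ℤ,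
      signedSum 0 N (g s) = Polynomial.eval (N:ℚ) (v ((N : ZMod p))) := by
    intro s
    by_cases hs : s < p
    · refine onevar_quasi p hp (g s)
        (fun r => if r = ((s : ℕ) : ZMod p) then Polynomial.X ^ j else 0) ?_
      intro k
      have hsmod : (s:ℤ) % (p:ℤ) = (s:ℤ) :=
        Int.emod_eq_of_lt (by positivity) (by exact_mod_cast hs)
      by_cases h : k % (p:ℤ) = (s:ℤ)
      · have hcast : ((k : ZMod p)) = ((s:ℕ) : ZMod p) := by
          have h1 : ((k : ZMod p)) = (((s:ℤ)) : ZMod p) := by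
            rw [ZMod.intCast_eq_intCast_iff]
            show k % (p:ℤ) = (s:ℤ) % (p:ℤ)
            rw [hsmod]; exact h
          simpa using h1
        simp [hg, h, hcast]
      · have hcast : ¬ ((k : ZMod p)) = ((s:ℕ) : ZMod p) := by
          intro hcontra
          apply h
          have h1 : ((k : ZMod p)) = (((s:ℤ)) : ZMod p) := by simpa using hcontra
          rw [ZMod.intCast_eq_intCast_iff] at h1
          have h2 : k % (p:ℤ) = (s:ℤ) % (p:ℤ) := h1
          rw [hsmod] at h2; exact h2
        simp [hg, h, hcast]
    · refine onevar_quasi p hp (g s) (fun _ => 0) ?_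
      intro k
      have hlt := Int.emod_lt_of_pos k hpz
      have hge := Int.emod_nonneg k (by omega : (p:ℤ) ≠ 0)
      have hps : (p:ℤ) ≤ (s:ℤ) := by exact_mod_cast not_lt.1 hs
      have hcond : ¬ (k % (p:ℤ) = (s:ℤ)) := by omega
      simp [hg, hcond]
  choose v hv using hvall
  have hfdvd := shift_dvd f p hf
  -- decomposition of the summand
  have hdecomp : ∀ (t : Fin (m+1) → ℤ) (N : ℤ),
      signedSum 0 N (fun k => f (fun i => t i.succ + a i * k) * (k:ℚ)^j)
        = ∑ s ∈ Finset.range p,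
            f (fun i => t i.succ + a i * s) * signedSum 0 N (g s) := by
    intro t N
    have hpt : ∀ k : ℤ, f (fun i => t i.succ + a i * k) * (k:ℚ)^j
        = ∑ s ∈ Finset.range p, f (fun i => t i.succ + a i * s) * g s k := by
      intro k
      have hnn : (0:ℤ) ≤ k % (p:ℤ) := Int.emod_nonneg k (by omega)
      set s₀ : ℕ := (k % (p:ℤ)).toNat with hs₀
      have hs₀cast : ((s₀:ℤ)) = k % (p:ℤ) := Int.toNat_of_nonneg hnn
      have hs₀lt : s₀ < p := by
        have := Int.emod_lt_of_pos k hpz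
        omega
      rw [Finset.sum_eq_single_of_mem s₀ (Finset.mem_range.2 hs₀lt)]
      · have hcond : k % (p:ℤ) = (s₀:ℤ) := hs₀cast.symm
        simp only [hg, hcond, if_pos, one_mul]
        have heq : f (fun i => t i.succ + a i * k)
            = f (fun i => t i.succ + a i * (s₀:ℤ)) := by
          apply hfdvd
          intro i
          have h1 : t i.succ + a i * k - (t i.succ + a i * (s₀:ℤ)) = a i * (k - s₀) := by ring
          rw [h1]
          have h2 : k - (s₀:ℤ) = (p:ℤ) * (k / (p:ℤ)) := by
            have := Int.mul_ediv_add_emod k (p:ℤ)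
            omega
          rw [h2]
          exact ⟨a i * (k / (p:ℤ)), by ring⟩
        rw [heq]
      · intro s hsmem hne
        have hcond : ¬ (k % (p:ℤ) = (s:ℤ)) := by
          intro hcontra
          apply hne
          omega
        simp [hg, hcond]
    calc signedSum 0 N (fun k => f (fun i => t i.succ + a i * k) * (k:ℚ)^j)
        = signedSum 0 N (fun k => ∑ s ∈ Finset.range p,
            f (fun i => t i.succ + a i * s) * g s k) := signedSum_congr hpt
      _ = ∑ s ∈ Finset.range p, signedSum 0 N
            (fun k => f (fun i => t i.succ + a i * s) * g s k) :=
          signedSum_sum _ _ _ _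
      _ = ∑ s ∈ Finset.range p,
            f (fun i => t i.succ + a i * s) * signedSum 0 N (g s) :=
          Finset.sum_congr rfl (fun s _ => signedSum_const_mul _ _ _ _)
  -- modulus
  set M : ℕ := p * d.natAbs with hM
  have hMpos : 0 < M := Nat.mul_pos hp (Int.natAbs_pos.2 hd)
  haveI : NeZero M := ⟨hMpos.ne'⟩
  have habs : ((d.natAbs : ℤ)) = d.sign * d := by
    rcases lt_or_gt_of_ne hd with h | h
    · rw [Int.sign_eq_neg_one_of_neg h]; omega
    · rw [Int.sign_eq_one_of_pos h]; omega
  have hMZ : (M:ℤ) = (p:ℤ) * d.sign * d := by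
    rw [hM]; push_cast [habs]; ring
  have hdq : (d:ℚ) ≠ 0 := Int.cast_ne_zero.2 hd
  have hMq : ((M:ℕ):ℚ) ≠ 0 := Nat.cast_ne_zero.2 hMpos.ne'
  have hfloor : ∀ (St σ x : ℤ), St - σ = (M:ℤ) * x →
      ⌊(St:ℚ)/(d:ℚ)⌋ = ⌊(σ:ℚ)/(d:ℚ)⌋ + (p:ℤ) * d.sign * x := by
    intro St σ x hx
    have hSt : St = σ + (M:ℤ) * x := by omega
    have h1 : (St:ℚ)/(d:ℚ) = (σ:ℚ)/(d:ℚ) + (((p:ℤ) * d.sign * x : ℤ) : ℚ) := by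
      rw [hSt]
      have h2 : ((M:ℤ):ℚ) = (p:ℚ) * ((d.sign : ℤ):ℚ) * (d:ℚ) := by exact_mod_cast hMZ
      push_cast at h2 ⊢
      rw [h2]
      field_simp
    rw [h1, Int.floor_add_intCast]
  -- the quasipolynomial data
  refine ⟨M, hMpos, ?_⟩
  refine ⟨fun r =>
    ∑ s ∈ Finset.range p,
      MvPolynomial.C (f (fun i => (((r i.succ).val : ℤ)) + a i * s)) *
        Polynomial.aeval
          (MvPolynomial.C ((⌊(((∑ i, c i * (((r i).val : ℤ)) : ℤ)):ℚ)/(d:ℚ)⌋ : ℚ))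
            + MvPolynomial.C (((((p:ℤ) * d.sign : ℤ)):ℚ)/((M:ℕ):ℚ)) *
              ((∑ i, MvPolynomial.C ((c i : ℚ)) * MvPolynomial.X i)
                - MvPolynomial.C ((((∑ i, c i * (((r i).val : ℤ)) : ℤ)):ℚ))))
          (v s ((⌊(((∑ i, c i * (((r i).val : ℤ)) : ℤ)):ℚ)/(d:ℚ)⌋ : ZMod p))), ?_⟩
  intro t
  set r : Fin (m+1) → ZMod M := fun i => ((t i : ZMod M)) with hr
  set t₀ : Fin (m+1) → ℤ := fun i => (((r i).val : ℤ)) with ht₀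
  have hcast : ∀ i, ((t₀ i : ZMod M)) = r i := by
    intro i
    rw [ht₀]
    push_cast
    simp [ZMod.natCast_val, ZMod.cast_id]
  have hdvdM : ∀ i, (M:ℤ) ∣ t i - t₀ i := by
    intro i
    have h0 : ((t i - t₀ i : ℤ) : ZMod M) = 0 := by
      push_cast
      rw [hcast i, hr]
      ring
    exact (ZMod.intCast_zmod_eq_zero_iff_dvd _ _).1 h0
  set σ : ℤ := ∑ i, c i * t₀ i with hσ
  set St : ℤ := ∑ i, c i * t i with hSt
  have hdvdS : (M:ℤ) ∣ St - σ := by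
    rw [hSt, hσ, ← Finset.sum_sub_distrib]
    apply Finset.dvd_sum
    intro i _
    have h1 : c i * t i - c i * t₀ i = (t i - t₀ i) * c i := by ring
    rw [h1]
    exact (hdvdM i).mul_right _
  obtain ⟨x, hx⟩ := hdvdS
  have hN : ⌊(St:ℚ)/(d:ℚ)⌋ = ⌊(σ:ℚ)/(d:ℚ)⌋ + (p:ℤ) * d.sign * x := hfloor St σ x hx
  simp only []
  rw [hdecomp t ⌊(St:ℚ)/(d:ℚ)⌋, map_sum]
  apply Finset.sum_congr rfl
  intro s hs
  rw [hv s ⌊(St:ℚ)/(d:ℚ)⌋, MvPolynomial.eval_mul, MvPolynomial.eval_C]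
  have hres : ((⌊(St:ℚ)/(d:ℚ)⌋ : ZMod p)) = ((⌊(σ:ℚ)/(d:ℚ)⌋ : ZMod p)) := by
    rw [hN]
    push_cast
    simp [ZMod.natCast_self]
  have hevalN : MvPolynomial.eval (fun i => ((t i : ℚ)))
      (MvPolynomial.C ((⌊(σ:ℚ)/(d:ℚ)⌋ : ℚ))
        + MvPolynomial.C (((((p:ℤ) * d.sign : ℤ)):ℚ)/((M:ℕ):ℚ)) *
          ((∑ i, MvPolynomial.C ((c i : ℚ)) * MvPolynomial.X i)
            - MvPolynomial.C ((σ:ℚ))))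
      = ((⌊(St:ℚ)/(d:ℚ)⌋ : ℚ)) := by
    rw [hN]
    have hsum : MvPolynomial.eval (fun i => ((t i : ℚ)))
        (∑ i, MvPolynomial.C ((c i : ℚ)) * MvPolynomial.X i) = ((St : ℚ)) := by
      rw [map_sum, hSt]
      push_cast
      apply Finset.sum_congr rfl
      intro i _
      simp
    simp only [map_add, map_mul, MvPolynomial.eval_C, map_sub, hsum]
    have hStval : ((St:ℚ)) = (σ:ℚ) + ((M:ℕ):ℚ) * (x:ℚ) := by
      have : St = σ + (M:ℤ) * x := by omega
      exact_mod_cast this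
    rw [hStval]
    push_cast
    field_simp
    ring
  congr 1
  · apply hfdvd
    intro i
    have h1 : (t i.succ + a i * s) - (t₀ i.succ + a i * s) = t i.succ - t₀ i.succ := by ring
    rw [h1]
    have hpM : (p:ℤ) ∣ (M:ℤ) := ⟨(d.natAbs : ℤ), by rw [hM]; push_cast; ring⟩
    exact dvd_trans hpM (hdvdM i.succ)
  · rw [hres, mv_eval_polyaeval, hevalN]
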